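/- Let f_t(x,y) = x·y·(x+y-4)·(x-ty) for a parameter t ∈ ℂ. For t ∉ {-1, 0}, the critical points of f_t outside the zero fiber (i.e., points where ∇f_t = 0 and f_t ≠ 0) give exactly two critical values when t² + t + 1 ≠ 0, and exactly one critical value, equal to 3(t-1), when t² + t + 1 = 0. -/

import Mathlib

/-- The family of polynomials `f_t(x,y) = x·y·(x+y-4)·(x-ty)`. -/
def fEx (t x y : ℂ) : ℂ := x * y * (x + y - 4) * (x - t * y)

/-- The set of critical values of `f_t` outside the zero fiber. -/
def critValEx (t : ℂ) : Set ℂ :=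
  {v : ℂ | v ≠ 0 ∧ ∃ x y : ℂ,
    deriv (fun u => fEx t u y) x = 0 ∧ deriv (fun u => fEx t x u) y = 0 ∧ fEx t x y = v}

lemma derivX (t x y : ℂ) : deriv (fun u => fEx t u y) x
    = y*(x+y-4)*(x-t*y) + x*y*(x-t*y) + x*y*(x+y-4) := by
  have h : HasDerivAt (fun u => fEx t u y)
      ((1*y*(x+y-4) + x*y*1)*(x - t*y) + (x*y*(x+y-4))*1) x := by
    simp only [fEx]
    exact (((hasDerivAt_id x).mul_const y).mul
      (((hasDerivAt_id x).add_const y).sub_const 4)).mul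
      ((hasDerivAt_id x).sub_const (t*y))
  rw [h.deriv]; ring

lemma derivY (t x y : ℂ) : deriv (fun u => fEx t x u) y
    = x*(x+y-4)*(x-t*y) + x*y*(x-t*y) + x*y*(x+y-4)*(-t) := by
  have h : HasDerivAt (fun u => fEx t x u)
      ((x*1*(x+y-4) + x*y*1)*(x - t*y) + (x*y*(x+y-4))*(-(t*1))) y := by
    simp only [fEx]
    exact ((( (hasDerivAt_id y).const_mul x).mul
      (((hasDerivAt_id y).const_add x).sub_const 4)).mul
      (((hasDerivAt_id y).const_mul t).const_sub x))
  rw [h.deriv]; ring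

lemma crit_char (t : ℂ) (ht1 : t ≠ -1) (ht0 : t ≠ 0) (v : ℂ) :
    v ∈ critValEx t ↔
      ∃ x : ℂ, (1+t)*x^2 - 2*(1+2*t)*x + 3*t = 0 ∧ v = x*(3-x)*(3*t-(1+t)*x) := by
  have ht1' : (1:ℂ) + t ≠ 0 := fun h => ht1 (by linear_combination h)
  constructor
  · rintro ⟨hv0, x, y, hdx, hdy, hv⟩
    rw [derivX] at hdx
    rw [derivY] at hdy
    have hf : x * y * (x + y - 4) * (x - t * y) ≠ 0 := by
      rw [show x * y * (x + y - 4) * (x - t * y) = fEx t x y from rfl, hv]; exact hv0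
    have hx : x ≠ 0 := fun h => hf (by rw [h]; ring)
    have hy : y ≠ 0 := fun h => hf (by rw [h]; ring)
    have hB : x - t*y ≠ 0 := by
      intro h; apply hf
      rw [show x * y * (x + y - 4) * (x - t * y)
        = x * y * (x + y - 4) * (x - t * y) from rfl]
      rw [h]; ring
    have hG1 : (x+y-4)*(x-t*y) + x*(x-t*y) + x*(x+y-4) = 0 := by
      have h0 : y * ((x+y-4)*(x-t*y) + x*(x-t*y) + x*(x+y-4)) = 0 := by
        linear_combination hdx
      exact (mul_eq_zero.mp h0).resolve_left hy
    have hG2 : (x+y-4)*(x-t*y) + y*(x-t*y) - t*y*(x+y-4) = 0 := by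
      have h0 : x * ((x+y-4)*(x-t*y) + y*(x-t*y) - t*y*(x+y-4)) = 0 := by
        linear_combination hdy
      exact (mul_eq_zero.mp h0).resolve_left hx
    have hP : (x+y-4)*(x+t*y) + (1+t)*x*y = 0 := by
      have h0 : (x - t*y) * ((x+y-4)*(x+t*y) + (1+t)*x*y) = 0 := by
        linear_combination (t*y)*hG1 + x*hG2
      exact (mul_eq_zero.mp h0).resolve_left hB
    have hGG : (x-t*y)*(x-y) + (x+y-4)*(x+t*y) = 0 := by
      linear_combination hG1 - hG2
    have hS : (1+t)*x*y - x - t*y = 0 := by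
      linear_combination (1/2)*hP - (1/4)*hGG
    have hI : x^2 + t*y^2 - 2*x - 2*t*y = 0 := by
      linear_combination hGG - hP + 2*hS
    have hQ0 : x^2*((1+t)*((1+t)*x^2 - 2*(1+2*t)*x + 3*t)) = 0 := by
      linear_combination (((1+t)*x - t)^2) * hI
        - (t*(y*((1+t)*x-t)+x) - 2*t*((1+t)*x-t)) * hS
    have hQ : (1+t)*x^2 - 2*(1+2*t)*x + 3*t = 0 := by
      rcases mul_eq_zero.mp hQ0 with h | h
      · exact absurd h (pow_ne_zero 2 hx)
      · exact (mul_eq_zero.mp h).resolve_left ht1'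
    have hD : (1+t)*x - t ≠ 0 := fun h => hx (by linear_combination y*h - hS)
    have hyx : y = 3 - x := by
      have h0 : (3 - x - y) * ((1+t)*x - t) = 0 := by
        linear_combination -hQ - hS
      have := (mul_eq_zero.mp h0).resolve_right hD
      linear_combination -this
    refine ⟨x, hQ, ?_⟩
    rw [← hv, hyx]
    simp only [fEx]; ring
  · rintro ⟨x, hQ, hveq⟩
    have hx : x ≠ 0 := by
      intro h; apply ht0
      rw [h] at hQ; linear_combination (1/3)*hQ
    have hx3 : (3:ℂ) - x ≠ 0 := by
      intro h
      have h3 : (3:ℂ) = 0 := by linear_combination hQ + ((1+t)*x+1-t)*h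
      norm_num at h3
    have hB : 3*t - (1+t)*x ≠ 0 := by
      intro h; apply ht0
      linear_combination (-(1/3))*(1+t)*hQ - (1/3)*((1+t)*x-(2+t))*h
    refine ⟨by rw [hveq]; exact mul_ne_zero (mul_ne_zero hx hx3) hB,
      x, 3 - x, ?_, ?_, ?_⟩
    · rw [derivX]; linear_combination (3-x)*hQ
    · rw [derivY]; linear_combination (-x)*hQ
    · rw [hveq]; simp only [fEx]; ring

/-- For `t ∉ {-1, 0}`, the critical points of `f_t = xy(x+y-4)(x-ty)`
outside the zero fiber give exactly two critical values when `t² + t + 1 ≠ 0`, and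
exactly one critical value, equal to `3(t-1)`, when `t² + t + 1 = 0`. -/
theorem critical_values_of_example_family
    (t : ℂ) (ht1 : t ≠ -1) (ht0 : t ≠ 0) :
    (t ^ 2 + t + 1 ≠ 0 → (critValEx t).ncard = 2) ∧
    (t ^ 2 + t + 1 = 0 → critValEx t = {3 * (t - 1)}) := by
  have ht1' : (1:ℂ) + t ≠ 0 := fun h => ht1 (by linear_combination h)
  constructor
  · intro hc
    obtain ⟨d, hd⟩ := IsAlgClosed.exists_pow_nat_eq (k := ℂ) (t^2+t+1) zero_lt_two
    have hd0 : d ≠ 0 := fun h => hc (by rw [← hd, h]; ring)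
    set x₁ : ℂ := (1+2*t+d)/(1+t) with hx1
    set x₂ : ℂ := (1+2*t-d)/(1+t) with hx2
    have hfac : ∀ x : ℂ, (1+t)*x^2 - 2*(1+2*t)*x + 3*t = (1+t)*((x - x₁)*(x - x₂)) := by
      intro x
      rw [hx1, hx2]
      field_simp
      ring_nf
      linear_combination hd
    have hroot : ∀ x : ℂ, ((1+t)*x^2 - 2*(1+2*t)*x + 3*t = 0) ↔ (x = x₁ ∨ x = x₂) := by
      intro x
      rw [hfac x]
      constructor
      · intro h
        rcases mul_eq_zero.mp h with h | h
        · exact absurd h ht1'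
        · rcases mul_eq_zero.mp h with h | h
          · exact Or.inl (by linear_combination h)
          · exact Or.inr (by linear_combination h)
      · rintro (rfl | rfl) <;> ring
    have hQ1 : (1+t)*x₁^2 - 2*(1+2*t)*x₁ + 3*t = 0 := (hroot x₁).mpr (Or.inl rfl)
    have hQ2 : (1+t)*x₂^2 - 2*(1+2*t)*x₂ + 3*t = 0 := (hroot x₂).mpr (Or.inr rfl)
    have hset : critValEx t = {x₁*(3-x₁)*(3*t-(1+t)*x₁), x₂*(3-x₂)*(3*t-(1+t)*x₂)} := by
      ext v
      rw [crit_char t ht1 ht0 v]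
      constructor
      · rintro ⟨x, hQ, rfl⟩
        rcases (hroot x).mp hQ with rfl | rfl
        · exact Or.inl rfl
        · exact Or.inr rfl
      · rintro (rfl | rfl)
        · exact ⟨x₁, hQ1, rfl⟩
        · exact ⟨x₂, hQ2, rfl⟩
    rw [hset]
    apply Set.ncard_pair
    intro h
    have e1 : (1+t)*(x₁*(3-x₁)*(3*t-(1+t)*x₁)) = 3*t*(1+2*t) - 2*(t^2+t+1)*x₁ := by
      linear_combination ((1+t)*x₁-(1+2*t))*hQ1
    have e2 : (1+t)*(x₂*(3-x₂)*(3*t-(1+t)*x₂)) = 3*t*(1+2*t) - 2*(t^2+t+1)*x₂ := by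
      linear_combination ((1+t)*x₂-(1+2*t))*hQ2
    have h12 : (2:ℂ)*(t^2+t+1)*(x₂ - x₁) = 0 := by
      linear_combination -e1 + e2 + (1+t)*h
    have hx12 : x₂ - x₁ = 0 := by
      rcases mul_eq_zero.mp h12 with h' | h'
      · exact absurd ((mul_eq_zero.mp h').resolve_left two_ne_zero) hc
      · exact h'
    apply hd0
    have : ((1:ℂ)+t) * (x₂ - x₁) = -(2*d) := by
      rw [hx1, hx2]; field_simp; ring
    rw [hx12, mul_zero] at this
    have := neg_eq_zero.mp this.symm
    exact (mul_eq_zero.mp this).resolve_left two_ne_zero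
  · intro hc
    ext v
    simp only [Set.mem_singleton_iff]
    rw [crit_char t ht1 ht0 v]
    constructor
    · rintro ⟨x, hQ, rfl⟩
      have h0 : (1+t)*(x*(3-x)*(3*t-(1+t)*x) - 3*(t-1)) = 0 := by
        linear_combination ((1+t)*x-(1+2*t))*hQ + (3-2*x)*hc
      have := (mul_eq_zero.mp h0).resolve_left ht1'
      linear_combination this
    · rintro rfl
      refine ⟨(1+2*t)/(1+t), ?_, ?_⟩
      · field_simp
        ring_nf
        linear_combination -hc
      · have hQ0 : (1+t)*((1+2*t)/(1+t))^2 - 2*(1+2*t)*((1+2*t)/(1+t)) + 3*t = 0 := by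
          field_simp
          ring_nf
          linear_combination -hc
        have e : (1+t)*(((1+2*t)/(1+t))*(3-(1+2*t)/(1+t))*(3*t-(1+t)*((1+2*t)/(1+t))))
            = 3*t*(1+2*t) - 2*(t^2+t+1)*((1+2*t)/(1+t)) := by
          linear_combination ((1+t)*((1+2*t)/(1+t))-(1+2*t))*hQ0
        have h0 : (1+t)*(3*(t-1) - ((1+2*t)/(1+t))*(3-(1+2*t)/(1+t))*(3*t-(1+t)*((1+2*t)/(1+t)))) = 0 := by
          linear_combination -e + (2*((1+2*t)/(1+t)) - 3)*hc
        have := (mul_eq_zero.mp h0).resolve_left ht1'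
        linear_combination this
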